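/- arXiv:0806.1035 — 3 statements merged into one kernel-verified Lean document; each statement's English description precedes it below -/
import Mathlib

section
/- Let (Ω, μ) be a measure space, let M₁, M₂ > 0, and let τ, ϑ : Ω → ℝ be measurable functions with 0 < τ(ω) ≤ M₁ and 0 ≤ ϑ(ω) ≤ M₂ for μ-almost every ω. Let γ ∈ (0,1) and λ ∈ ℂ, and for k ∈ ℤ define F_k(ω) = (log γ − ϑ(ω))/τ(ω) − 2πik/τ(ω). Assume that for every k ∈ ℤ there exists β_k > 0 such that |λ − F_k(ω)| ≥ β_k for μ-almost every ω ∈ Ω. Then there exists δ > 0 such that |γ·e^{−ϑ(ω)−λτ(ω)} − 1| ≥ δ for μ-almost every ω ∈ Ω. -/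
open MeasureTheory
open scoped Real

/-- Pointwise core lemma: if the complex number `z = x + y i` has `|x| ≤ X`,
its distance to the nearest `2πk i` (with `|y - 2πk| ≤ π`) at least `ε ∈ (0,1]`,
then `|e^z - 1|` is bounded below by an explicit positive quantity. -/
lemma exp_sub_one_lower {x y ε X : ℝ} (hε0 : 0 < ε) (hε1 : ε ≤ 1)
    (hX : |x| ≤ X) {k : ℤ} (hk : |y - 2 * π * k| ≤ π)
    (hdist : ε ≤ |x| + |y - 2 * π * k|) :
    min (1 - Real.exp (-(ε/2)))
      (Real.sqrt (2 * Real.exp (-X) * (1 - Real.cos (ε/2))))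
      ≤ ‖(Complex.exp ⟨x, y⟩ - 1)‖ := by
  have hpi : (0:ℝ) < π := Real.pi_pos
  rcases le_or_gt (ε/2) |x| with hx | hx
  · -- real part dominates: |e^z - 1| ≥ |e^x - 1| ≥ 1 - e^{-ε/2}
    refine le_trans (min_le_left _ _) ?_
    have h1 : |Real.exp x - 1| ≤ ‖(Complex.exp ⟨x, y⟩ - 1)‖ := by
      have := abs_norm_sub_norm_le (Complex.exp ⟨x, y⟩) 1
      simpa [Complex.norm_exp] using this
    refine le_trans ?_ h1
    rcases le_or_gt 0 x with h0 | h0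
    · have hxε : ε/2 ≤ x := by rwa [abs_of_nonneg h0] at hx
      have h2 : Real.exp (-(ε/2)) + Real.exp (ε/2) ≥ 2 := by
        have a := Real.add_one_le_exp (ε/2)
        have b := Real.add_one_le_exp (-(ε/2))
        linarith
      have h3 : Real.exp (ε/2) ≤ Real.exp x := Real.exp_le_exp.2 hxε
      have h4 : (1:ℝ) ≤ Real.exp x := by
        calc (1:ℝ) = Real.exp 0 := Real.exp_zero.symm
          _ ≤ Real.exp x := Real.exp_le_exp.2 h0
      rw [abs_of_nonneg (by linarith)]
      linarith
    · have hxε : x ≤ -(ε/2) := by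
        rw [abs_of_neg h0] at hx; linarith
      have h3 : Real.exp x ≤ Real.exp (-(ε/2)) := Real.exp_le_exp.2 hxε
      have h5 : Real.exp x < 1 := Real.exp_lt_one_iff.2 h0
      rw [abs_of_nonpos (by linarith)]
      linarith
  · -- imaginary part dominates: d := |y - 2πk| ≥ ε/2
    refine le_trans (min_le_right _ _) ?_
    set d : ℝ := |y - 2 * π * k| with hd
    have hdε : ε/2 ≤ d := by
      have : |x| + d ≥ ε := hdist
      linarith
    have hcos : Real.cos d ≤ Real.cos (ε/2) :=
      Real.cos_le_cos_of_nonneg_of_le_pi (by linarith) hk hdε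
    have hcosy : Real.cos y = Real.cos d := by
      rw [hd, Real.cos_abs]
      have : y - 2 * π * k = -(↑k * (2*π) - y) := by ring
      rw [this, Real.cos_neg, Real.cos_int_mul_two_pi_sub]
    have hxX : -X ≤ x := by
      have := neg_abs_le x; linarith [le_abs_self x, hX]
    have hex : Real.exp (-X) ≤ Real.exp x := Real.exp_le_exp.2 hxX
    have hsq : 2 * Real.exp (-X) * (1 - Real.cos (ε/2))
        ≤ (‖(Complex.exp ⟨x, y⟩ - 1)‖)^2 := by
      rw [Complex.sq_norm, Complex.normSq_apply]
      have hre : (Complex.exp ⟨x, y⟩ - 1).re = Real.exp x * Real.cos y - 1 := by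
        simp [Complex.exp_re]
      have him : (Complex.exp ⟨x, y⟩ - 1).im = Real.exp x * Real.sin y := by
        simp [Complex.exp_im]
      rw [hre, him]
      have hsc : Real.sin y ^ 2 + Real.cos y ^ 2 = 1 := Real.sin_sq_add_cos_sq y
      have hcy : Real.cos y ≤ Real.cos (ε/2) := hcosy ▸ hcos
      have hcbd : -1 ≤ Real.cos (ε/2) := by
        have := Real.neg_one_le_cos (ε/2); linarith
      have hexpos : 0 < Real.exp x := Real.exp_pos x
      nlinarith [sq_nonneg (Real.exp x - 1), Real.exp_pos (-X), sq_nonneg (Real.sin y),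
        Real.neg_one_le_cos y, Real.cos_le_one y]
    calc Real.sqrt (2 * Real.exp (-X) * (1 - Real.cos (ε/2)))
        ≤ Real.sqrt ((‖(Complex.exp ⟨x, y⟩ - 1)‖)^2) := Real.sqrt_le_sqrt hsq
      _ = ‖(Complex.exp ⟨x, y⟩ - 1)‖ := Real.sqrt_sq (norm_nonneg _)

/-- Auxiliary algebraic identity. -/
lemma aux_eq (t a b : ℝ) (ht : t ≠ 0) (l : ℂ) :
    (⟨a - l.re * t, -(l.im * t) - b⟩ : ℂ)
      = -((t:ℝ) : ℂ) * (l - (((a / t : ℝ) : ℂ) - ((b / t : ℝ) : ℂ) * Complex.I)) := by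
  apply Complex.ext <;>
    simp only [Complex.neg_re, Complex.neg_im, Complex.mul_re, Complex.mul_im,
      Complex.sub_re, Complex.sub_im, Complex.ofReal_re, Complex.ofReal_im,
      Complex.I_re, Complex.I_im] <;>
    field_simp <;> ring

set_option maxHeartbeats 1600000 in
/-- Let `(Ω,μ)` be a measure space, `M₁, M₂ > 0`, and `τ, ϑ : Ω → ℝ`
measurable with `0 < τ ≤ M₁` and `0 ≤ ϑ ≤ M₂` a.e. Let `γ ∈ (0,1)`, `λ ∈ ℂ`, and
`F_k(ω) = (log γ - ϑ(ω))/τ(ω) - 2πik/τ(ω)`. If for every `k ∈ ℤ` there is `β_k > 0`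
with `|λ - F_k(ω)| ≥ β_k` a.e., then there is `δ > 0` with
`|γ·e^{-ϑ(ω)-λτ(ω)} - 1| ≥ δ` a.e. -/
theorem stmt11 {Ω : Type*} [MeasurableSpace Ω] (μ : Measure Ω)
    (M₁ M₂ : ℝ) (hM₁ : 0 < M₁) (hM₂ : 0 < M₂)
    (τ ϑ : Ω → ℝ) (hτm : Measurable τ) (hϑm : Measurable ϑ)
    (hτb : ∀ᵐ ω ∂μ, 0 < τ ω ∧ τ ω ≤ M₁)
    (hϑb : ∀ᵐ ω ∂μ, 0 ≤ ϑ ω ∧ ϑ ω ≤ M₂)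
    (γ : ℝ) (hγ : γ ∈ Set.Ioo (0:ℝ) 1) (l : ℂ)
    (hsep : ∀ k : ℤ, ∃ β > (0:ℝ), ∀ᵐ ω ∂μ,
      β ≤ ‖(l -
        ((((Real.log γ - ϑ ω) / τ ω : ℝ) : ℂ)
          - (((2 * Real.pi * (k : ℝ) / τ ω : ℝ)) : ℂ) * Complex.I))‖) :
    ∃ δ > (0:ℝ), ∀ᵐ ω ∂μ,
      δ ≤ ‖((γ : ℂ) * Complex.exp (-(ϑ ω : ℂ) - l * (τ ω : ℂ)) - 1)‖ := by
  obtain ⟨hγ0, hγ1⟩ := hγ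
  have hpi : (0:ℝ) < π := Real.pi_pos
  have hlog : Real.log γ < 0 := Real.log_neg hγ0 hγ1
  choose B hBpos hB using hsep
  -- the finite set of relevant integers
  set K : ℕ := ⌈‖l‖ * M₁ / (2*π)⌉₊ + 1 with hK
  set S : Finset ℤ := Finset.Icc (-(K:ℤ)) (K:ℤ) with hS
  have hSne : S.Nonempty := ⟨0, by simp [hS]⟩
  set β : ℝ := S.inf' hSne B with hβ
  have hβpos : 0 < β := by
    rw [hβ, Finset.lt_inf'_iff]
    exact fun k _ => hBpos k
  set τ₀ : ℝ := -Real.log γ / (2*(|l.re|+1)) with hτ₀def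
  have hτ₀ : 0 < τ₀ := by
    apply div_pos (by linarith)
    positivity
  set ε : ℝ := min (τ₀ * β) 1 with hε
  have hε0 : 0 < ε := lt_min (by positivity) one_pos
  have hε1 : ε ≤ 1 := min_le_right _ _
  set X : ℝ := -Real.log γ + M₂ + ‖l‖ * M₁ with hX
  have hXpos : 0 < X := by
    have := (norm_nonneg l)
    have : 0 ≤ ‖l‖ * M₁ := by positivity
    rw [hX]; linarith
  set δ₁ : ℝ := 1 - Real.exp (Real.log γ / 2) with hδ₁
  have hδ₁pos : 0 < δ₁ := by
    have : Real.exp (Real.log γ / 2) < 1 := Real.exp_lt_one_iff.2 (by linarith)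
    rw [hδ₁]; linarith
  set δ₂ : ℝ := 1 - Real.exp (-(ε/2)) with hδ₂
  have hδ₂pos : 0 < δ₂ := by
    have : Real.exp (-(ε/2)) < 1 := Real.exp_lt_one_iff.2 (by linarith)
    rw [hδ₂]; linarith
  set δ₃ : ℝ := Real.sqrt (2 * Real.exp (-X) * (1 - Real.cos (ε/2))) with hδ₃
  have hδ₃pos : 0 < δ₃ := by
    have hc : Real.cos (ε/2) < 1 := by
      have := Real.cos_lt_cos_of_nonneg_of_le_pi (le_refl 0)
        (by linarith [Real.pi_gt_three] : ε/2 ≤ π) (by linarith : (0:ℝ) < ε/2)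
      simpa using this
    rw [hδ₃]
    apply Real.sqrt_pos.2
    have := Real.exp_pos (-X)
    nlinarith
  refine ⟨min δ₁ (min δ₂ δ₃), lt_min hδ₁pos (lt_min hδ₂pos hδ₃pos), ?_⟩
  have hae : ∀ᵐ ω ∂μ, ∀ k ∈ S, B k ≤ ‖(l -
        ((((Real.log γ - ϑ ω) / τ ω : ℝ) : ℂ)
          - (((2 * Real.pi * (k : ℝ) / τ ω : ℝ)) : ℂ) * Complex.I))‖ := by
    rw [Filter.eventually_all_finset]
    exact fun k _ => hB k
  filter_upwards [hτb, hϑb, hae] with ω hτω hϑω hkω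
  obtain ⟨ht0, htM⟩ := hτω
  obtain ⟨hv0, hvM⟩ := hϑω
  set t : ℝ := τ ω
  set v : ℝ := ϑ ω
  -- rewrite the multiplier as a single exponential
  set x : ℝ := Real.log γ - v - l.re * t with hx
  set y : ℝ := -(l.im * t) with hy
  have hzeq : (γ : ℂ) * Complex.exp (-(v : ℂ) - l * (t : ℂ)) = Complex.exp ⟨x, y⟩ := by
    have hγexp : (γ : ℂ) = Complex.exp ((Real.log γ : ℝ) : ℂ) := by
      rw [← Complex.ofReal_exp, Real.exp_log hγ0]
    rw [hγexp, ← Complex.exp_add]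
    congr 1
    apply Complex.ext
    · simp only [Complex.add_re, Complex.sub_re, Complex.neg_re, Complex.mul_re,
        Complex.ofReal_re, Complex.ofReal_im]
      rw [hx]; ring
    · simp only [Complex.add_im, Complex.sub_im, Complex.neg_im, Complex.mul_im,
        Complex.ofReal_re, Complex.ofReal_im]
      rw [hy]; ring
  rw [hzeq]
  -- bounds on x
  have hrle : |l.re| ≤ ‖l‖ := Complex.abs_re_le_norm l
  have himle : |l.im| ≤ ‖l‖ := Complex.abs_im_le_norm l
  have hxabs : |x| ≤ X := by
    rw [abs_le]
    constructor
    · rw [hX, hx]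
      have h1 : l.re * t ≤ |l.re| * t := by
        have := le_abs_self l.re
        nlinarith
      have h2 : |l.re| * t ≤ ‖l‖ * M₁ := by
        apply mul_le_mul hrle htM ht0.le (norm_nonneg _)
      linarith
    · rw [hX, hx]
      have h1 : -(l.re * t) ≤ |l.re| * t := by
        have := neg_abs_le l.re
        nlinarith
      have h2 : |l.re| * t ≤ ‖l‖ * M₁ := by
        apply mul_le_mul hrle htM ht0.le (norm_nonneg _)
      linarith
  rcases le_or_gt t τ₀ with htc | htc
  · -- small t: |e^z| ≤ √γ < 1
    refine le_trans (min_le_left _ _) ?_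
    have hxub : x ≤ Real.log γ / 2 := by
      have h1 : -(l.re * t) ≤ |l.re| * t := by
        have := neg_abs_le l.re; nlinarith
      have h2 : |l.re| * t ≤ |l.re| * τ₀ := by
        apply mul_le_mul_of_nonneg_left htc (abs_nonneg _)
      have h3 : |l.re| * τ₀ ≤ -Real.log γ / 2 := by
        rw [hτ₀def, ← mul_div_assoc,
          div_le_div_iff₀ (by positivity) (by norm_num : (0:ℝ) < 2)]
        nlinarith [abs_nonneg l.re]
      rw [hx]; linarith
    have h1 : 1 - ‖(Complex.exp ⟨x, y⟩)‖ ≤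
        ‖(Complex.exp ⟨x, y⟩ - 1)‖ := by
      have := abs_norm_sub_norm_le (Complex.exp ⟨x, y⟩ - 1 : ℂ) (-1 : ℂ)
      have h := norm_sub_norm_le (1:ℂ) (Complex.exp ⟨x, y⟩)
      calc 1 - ‖(Complex.exp ⟨x, y⟩)‖
          = ‖(1:ℂ)‖ - ‖Complex.exp ⟨x, y⟩‖ := by simp
        _ ≤ ‖(1:ℂ) - Complex.exp ⟨x, y⟩‖ := norm_sub_norm_le _ _
        _ = ‖(Complex.exp ⟨x, y⟩ - 1)‖ := by
            rw [norm_sub_rev]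
    have h2 : ‖(Complex.exp ⟨x, y⟩)‖ ≤ Real.exp (Real.log γ / 2) := by
      rw [Complex.norm_exp]
      exact Real.exp_le_exp.2 (by simpa using hxub)
    rw [hδ₁]; linarith
  · -- large t: use separation from the nearest F_k
    refine le_trans (min_le_right _ _) ?_
    set k₀ : ℤ := round (y / (2*π)) with hk₀
    have hroundd : |y / (2*π) - k₀| ≤ 1/2 := abs_sub_round _
    have hdk : |y - 2 * π * k₀| ≤ π := by
      have h2π : (0:ℝ) < 2*π := by linarith
      have heq : y - 2 * π * k₀ = (2*π) * (y / (2*π) - k₀) := by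
        field_simp
      rw [heq, abs_mul, abs_of_pos h2π]
      calc 2*π*|y/(2*π) - (k₀:ℝ)| ≤ 2*π*(1/2) :=
            mul_le_mul_of_nonneg_left hroundd h2π.le
        _ = π := by ring
    have hyabs : |y| ≤ ‖l‖ * M₁ := by
      rw [hy, abs_neg, abs_mul]
      apply mul_le_mul himle (by rwa [abs_of_pos ht0]) (abs_nonneg _)
        (norm_nonneg _)
    have hk₀S : k₀ ∈ S := by
      rw [hS, Finset.mem_Icc]
      have habs : |(k₀:ℝ)| ≤ ‖l‖ * M₁ / (2*π) + 1/2 := by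
        have h1 : |(k₀:ℝ)| ≤ |y/(2*π)| + 1/2 := by
          have := abs_sub_abs_le_abs_sub (k₀:ℝ) (y/(2*π))
          have h2 : |(k₀:ℝ) - y/(2*π)| ≤ 1/2 := by rwa [abs_sub_comm] at hroundd
          linarith
        have h2 : |y/(2*π)| ≤ ‖l‖ * M₁ / (2*π) := by
          rw [abs_div, abs_of_pos (by linarith : (0:ℝ) < 2*π)]
          exact (div_le_div_iff_of_pos_right (by linarith)).2 hyabs
        linarith
      have hKb : ‖l‖ * M₁ / (2*π) + 1/2 ≤ (K:ℝ) := by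
        rw [hK]
        push_cast
        have := Nat.le_ceil (‖l‖ * M₁ / (2*π))
        linarith
      have h3 : |(k₀:ℝ)| ≤ (K:ℝ) := habs.trans hKb
      have h4 : |k₀| ≤ (K:ℤ) := by exact_mod_cast h3
      exact abs_le.1 h4
    have hsepk : β ≤ ‖(l -
        ((((Real.log γ - v) / t : ℝ) : ℂ)
          - (((2 * Real.pi * (k₀ : ℝ) / t : ℝ)) : ℂ) * Complex.I))‖ := by
      refine le_trans ?_ (hkω k₀ hk₀S)
      exact Finset.inf'_le B hk₀S
    -- distance from z to 2πk₀ i is t times the separation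
    have hzdist : ε ≤ |x| + |y - 2 * π * k₀| := by
      have habs : ‖((⟨x, y⟩ : ℂ) - (2 * π * k₀ : ℝ) * Complex.I)‖
          ≤ |x| + |y - 2 * π * k₀| := by
        have := Complex.norm_le_abs_re_add_abs_im
          ((⟨x, y⟩ : ℂ) - (2 * π * k₀ : ℝ) * Complex.I)
        simpa using this
      have heq : ((⟨x, y⟩ : ℂ) - (2 * π * k₀ : ℝ) * Complex.I)
          = -((t:ℝ) : ℂ) * (l -
        ((((Real.log γ - v) / t : ℝ) : ℂ)
          - (((2 * Real.pi * (k₀ : ℝ) / t : ℝ)) : ℂ) * Complex.I)) := by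
        have hsub : ((⟨x, y⟩ : ℂ) - ((2 * π * (k₀:ℝ) : ℝ) : ℂ) * Complex.I)
            = (⟨(Real.log γ - v) - l.re * t, -(l.im * t) - 2 * π * (k₀:ℝ)⟩ : ℂ) := by
          apply Complex.ext <;>
            simp [hx, hy, Complex.sub_re, Complex.sub_im, Complex.mul_re,
              Complex.mul_im] <;> ring
        rw [show ((2 * π * (k₀ : ℝ) : ℝ) : ℂ) = ((2 * π * (k₀:ℝ) : ℝ) : ℂ) from rfl] at hsub
        rw [hsub]
        exact aux_eq t (Real.log γ - v) (2 * π * (k₀:ℝ)) (ne_of_gt ht0) l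
      have hval : ‖((⟨x, y⟩ : ℂ) - (2 * π * k₀ : ℝ) * Complex.I)‖
          = t * ‖(l -
        ((((Real.log γ - v) / t : ℝ) : ℂ)
          - (((2 * Real.pi * (k₀ : ℝ) / t : ℝ)) : ℂ) * Complex.I))‖ := by
        rw [heq, norm_mul, norm_neg, Complex.norm_real, Real.norm_eq_abs, abs_of_pos ht0]
      have h1 : t * β ≤ ‖((⟨x, y⟩ : ℂ) - (2 * π * k₀ : ℝ) * Complex.I)‖ := by
        rw [hval]
        exact mul_le_mul_of_nonneg_left hsepk ht0.le
      have h2 : τ₀ * β ≤ t * β := mul_le_mul_of_nonneg_right htc.le hβpos.le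
      have h3 : ε ≤ τ₀ * β := min_le_left _ _
      linarith
    exact exp_sub_one_lower hε0 hε1 hxabs hdk hzdist
end

section
/- Let D ⊆ ℝ^N be a convex open set and x ∈ D. Then for all Borel measurable functions g : ℝ^N → [0,∞] and w : ℝ × ℝ^N → [0,∞] one has ∫_{ℝ^N} ( ∫_{−t₋(x,v)}^{t₊(x,v)} g(x + t·v)·w(t,v) dt ) dv = ∫_{ℝ∖{0}} |t|^{−N} ( ∫_D g(y)·w(t, (y−x)/t) dy ) dt, with both sides valued in [0,∞]. -/
open MeasureTheory Set
open scoped ENNReal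

/-- Forward exit time `t₊(x,v) = sup {t > 0 : x + s•v ∈ D for all 0 < s < t}`,
valued in `[0,∞]`, equal to `0` if no such `t` exists. -/
noncomputable def tPlus {N : ℕ} (D : Set (EuclideanSpace ℝ (Fin N)))
    (x v : EuclideanSpace ℝ (Fin N)) : ℝ≥0∞ :=
  sSup (ENNReal.ofReal '' {t : ℝ | 0 < t ∧ ∀ s : ℝ, 0 < s → s < t → x + s • v ∈ D})

/-- Backward exit time `t₋(x,v) = t₊(x,-v)`. -/
noncomputable def tMinus {N : ℕ} (D : Set (EuclideanSpace ℝ (Fin N)))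
    (x v : EuclideanSpace ℝ (Fin N)) : ℝ≥0∞ :=
  tPlus D x (-v)

/-- Sojourn time `τ(x,v) = t₋(x,v) + t₊(x,v)`. -/
noncomputable def sojourn {N : ℕ} (D : Set (EuclideanSpace ℝ (Fin N)))
    (x v : EuclideanSpace ℝ (Fin N)) : ℝ≥0∞ :=
  tMinus D x v + tPlus D x v

section Aux

variable {N : ℕ} {D : Set (EuclideanSpace ℝ (Fin N))} {x v : EuclideanSpace ℝ (Fin N)}

lemma tPlus_pos (hD : IsOpen D) (hx : x ∈ D) (v : EuclideanSpace ℝ (Fin N)) :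
    0 < tPlus D x v := by
  obtain ⟨ε, hε, hball⟩ := Metric.isOpen_iff.1 hD x hx
  set δ := ε / (‖v‖ + 1) with hδdef
  have hδ : 0 < δ := div_pos hε (by positivity)
  have hmem : ENNReal.ofReal δ ∈
      ENNReal.ofReal '' {t : ℝ | 0 < t ∧ ∀ s : ℝ, 0 < s → s < t → x + s • v ∈ D} := by
    refine ⟨δ, ⟨hδ, fun s hs hs' => ?_⟩, rfl⟩
    apply hball
    rw [Metric.mem_ball, dist_eq_norm, add_sub_cancel_left, norm_smul,
      Real.norm_eq_abs, abs_of_pos hs]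
    calc s * ‖v‖ ≤ s * (‖v‖ + 1) := by nlinarith [norm_nonneg v]
      _ < δ * (‖v‖ + 1) := by nlinarith [norm_nonneg v]
      _ = ε := by rw [hδdef]; field_simp
  calc (0:ℝ≥0∞) < ENNReal.ofReal δ := by simpa using hδ
    _ ≤ tPlus D x v := le_sSup hmem

lemma lt_tPlus_iff (hD : IsOpen D) (hconv : Convex ℝ D) (hx : x ∈ D)
    (v : EuclideanSpace ℝ (Fin N)) {t : ℝ} (ht : 0 ≤ t) :
    ENNReal.ofReal t < tPlus D x v ↔ x + t • v ∈ D := by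
  constructor
  · intro h
    obtain ⟨a, ⟨t', ⟨ht'pos, ht'⟩, rfl⟩, hlt⟩ := lt_sSup_iff.1 h
    have htt' : t < t' := by
      by_contra hc
      exact absurd (ENNReal.ofReal_le_ofReal (not_lt.1 hc)) (not_le.2 hlt)
    rcases eq_or_lt_of_le ht with h0 | h0
    · simpa [← h0] using hx
    · exact ht' t h0 htt'
  · intro hmem
    obtain ⟨ε, hε, hball⟩ := Metric.isOpen_iff.1 hD _ hmem
    set δ := ε / (‖v‖ + 1) with hδdef
    have hδ : 0 < δ := div_pos hε (by positivity)
    have hsub : ENNReal.ofReal (t + δ) ≤ tPlus D x v := by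
      apply le_sSup
      refine ⟨t + δ, ⟨by linarith, fun s hs hs' => ?_⟩, rfl⟩
      rcases le_or_gt s t with hst | hst
      · have htpos : 0 < t := lt_of_lt_of_le hs hst
        have hst' : s / t * t = s := div_mul_cancel₀ s htpos.ne'
        have := hconv hx hmem (a := 1 - s / t) (b := s / t)
          (sub_nonneg.2 ((div_le_one htpos).2 hst)) (by positivity) (by ring)
        convert this using 1
        rw [smul_add, smul_smul, hst']
        module
      · apply hball
        rw [Metric.mem_ball, dist_eq_norm]
        have : x + s • v - (x + t • v) = (s - t) • v := by module
        rw [this, norm_smul, Real.norm_eq_abs, abs_of_pos (by linarith)]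
        calc (s-t) * ‖v‖ ≤ (s-t) * (‖v‖ + 1) := by nlinarith [norm_nonneg v]
          _ < δ * (‖v‖ + 1) := by nlinarith [norm_nonneg v]
          _ = ε := by rw [hδdef]; field_simp
    exact lt_of_lt_of_le (ENNReal.ofReal_lt_ofReal_iff (by linarith) |>.2 (by linarith)) hsub

lemma coe_lt_coe_ennreal {t : ℝ} (ht : 0 ≤ t) (a : ℝ≥0∞) :
    ((t : ℝ) : EReal) < (a : EReal) ↔ ENNReal.ofReal t < a := by
  rw [show ((t : ℝ) : EReal) = ((ENNReal.ofReal t : ℝ≥0∞) : EReal) by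
    rw [EReal.coe_ennreal_ofReal, max_eq_left ht], EReal.coe_ennreal_lt_coe_ennreal_iff]

lemma cond_iff (hD : IsOpen D) (hconv : Convex ℝ D) (hx : x ∈ D)
    (v : EuclideanSpace ℝ (Fin N)) (t : ℝ) :
    (-((tMinus D x v : ℝ≥0∞) : EReal) < (t : ℝ) ∧
      (t : ℝ) < ((tPlus D x v : ℝ≥0∞) : EReal)) ↔ x + t • v ∈ D := by
  unfold tMinus
  rcases le_total 0 t with ht | ht
  · have h2 : ((t:ℝ) : EReal) < (tPlus D x v : EReal) ↔ x + t • v ∈ D := by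
      rw [coe_lt_coe_ennreal ht, lt_tPlus_iff hD hconv hx v ht]
    have h1 : -((tPlus D x (-v) : ℝ≥0∞) : EReal) < (t : ℝ) := by
      refine EReal.neg_lt_comm.mpr (lt_of_le_of_lt (b := (0 : EReal)) ?_ ?_)
      · rw [← EReal.coe_neg]
        exact_mod_cast neg_nonpos.2 ht
      · exact_mod_cast tPlus_pos hD hx (-v)
    exact ⟨fun h => h2.1 h.2, fun h => ⟨h1, h2.2 h⟩⟩
  · have hxv : x + t • v = x + (-t) • (-v) := by module
    have h1 : (-((tPlus D x (-v) : ℝ≥0∞) : EReal) < (t : ℝ)) ↔ x + t • v ∈ D := by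
      rw [EReal.neg_lt_comm, show -((t:ℝ) : EReal) = (((-t : ℝ)) : EReal) by
        rw [EReal.coe_neg], coe_lt_coe_ennreal (by linarith) _,
        lt_tPlus_iff hD hconv hx (-v) (by linarith), ← hxv]
    have h2 : ((t:ℝ) : EReal) < (tPlus D x v : EReal) := by
      refine lt_of_le_of_lt (show ((t:ℝ):EReal) ≤ 0 by exact_mod_cast ht) ?_
      exact_mod_cast tPlus_pos hD hx v
    exact ⟨fun h => h1.1 h.1, fun h => ⟨h1.2 h, h2⟩⟩

lemma lintegral_smul_sub {N : ℕ} (x : EuclideanSpace ℝ (Fin N)) {t : ℝ} (ht : t ≠ 0)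
    (f : EuclideanSpace ℝ (Fin N) → ℝ≥0∞) (hf : Measurable f) :
    ∫⁻ y, f (t⁻¹ • (y - x)) = ENNReal.ofReal (|t| ^ N) * ∫⁻ v, f v := by
  have hmap : Measure.map (t⁻¹ • · : EuclideanSpace ℝ (Fin N) → _) volume
      = ENNReal.ofReal (|t| ^ N) • volume := by
    rw [Measure.map_addHaar_smul volume (inv_ne_zero ht)]
    congr 1
    rw [finrank_euclideanSpace_fin, inv_pow, inv_inv, abs_pow]
  have hG : Measurable fun z => f (z - t⁻¹ • x) := hf.comp (measurable_sub_const _)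
  calc ∫⁻ y, f (t⁻¹ • (y - x))
      = ∫⁻ y, (fun z => f (z - t⁻¹ • x)) (t⁻¹ • y) := by
        refine lintegral_congr fun y => ?_
        simp [smul_sub]
    _ = ∫⁻ z, f (z - t⁻¹ • x) ∂(Measure.map (t⁻¹ • ·) volume) :=
        (lintegral_map hG (measurable_const_smul _)).symm
    _ = ENNReal.ofReal (|t| ^ N) * ∫⁻ z, f (z - t⁻¹ • x) := by
        rw [hmap, lintegral_smul_measure, smul_eq_mul]
    _ = ENNReal.ofReal (|t| ^ N) * ∫⁻ v, f v := by
        rw [lintegral_sub_right_eq_self (fun z => f z) (t⁻¹ • x)]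

end Aux

/-- For `D` convex open and `x ∈ D`, for all Borel measurable
`g : ℝ^N → [0,∞]` and `w : ℝ × ℝ^N → [0,∞]`:
`∫_{ℝ^N} ∫_{-t₋(x,v)}^{t₊(x,v)} g(x+t•v)·w(t,v) dt dv
  = ∫_{ℝ∖{0}} |t|^{-N} ∫_D g(y)·w(t,(y-x)/t) dy dt`. -/
theorem stmt14 {N : ℕ} (D : Set (EuclideanSpace ℝ (Fin N))) (hD : IsOpen D)
    (hconv : Convex ℝ D) (x : EuclideanSpace ℝ (Fin N)) (hx : x ∈ D)
    (g : EuclideanSpace ℝ (Fin N) → ℝ≥0∞) (hg : Measurable g)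
    (w : ℝ × EuclideanSpace ℝ (Fin N) → ℝ≥0∞) (hw : Measurable w) :
    (∫⁻ v, ∫⁻ t in {t : ℝ | -((tMinus D x v : ℝ≥0∞) : EReal) < (t : ℝ) ∧
          (t : ℝ) < ((tPlus D x v : ℝ≥0∞) : EReal)},
        g (x + t • v) * w (t, v))
    = ∫⁻ t in {t : ℝ | t ≠ 0},
        (ENNReal.ofReal (|t| ^ N))⁻¹ * ∫⁻ y in D, g y * w (t, t⁻¹ • (y - x)) := by
  classical
  have hDm : MeasurableSet D := hD.measurableSet
  have hcont : Continuous fun p : ℝ × EuclideanSpace ℝ (Fin N) => x + p.1 • p.2 := by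
    fun_prop
  set S : Set (ℝ × EuclideanSpace ℝ (Fin N)) := {p | x + p.1 • p.2 ∈ D} with hS
  have hSm : MeasurableSet S := hD.preimage hcont |>.measurableSet
  set F : ℝ × EuclideanSpace ℝ (Fin N) → ℝ≥0∞ :=
    S.indicator (fun p => g (x + p.1 • p.2) * w p) with hF
  have hFm : Measurable F := ((hg.comp hcont.measurable).mul hw).indicator hSm
  have step1 : (∫⁻ v, ∫⁻ t in {t : ℝ | -((tMinus D x v : ℝ≥0∞) : EReal) < (t : ℝ) ∧
          (t : ℝ) < ((tPlus D x v : ℝ≥0∞) : EReal)},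
        g (x + t • v) * w (t, v)) = ∫⁻ v, ∫⁻ t, F (t, v) := by
    refine lintegral_congr fun v => ?_
    have hsetv : {t : ℝ | -((tMinus D x v : ℝ≥0∞) : EReal) < (t : ℝ) ∧
        (t : ℝ) < ((tPlus D x v : ℝ≥0∞) : EReal)} = {t : ℝ | x + t • v ∈ D} :=
      Set.ext fun t => cond_iff hD hconv hx v t
    have hmt : MeasurableSet {t : ℝ | x + t • v ∈ D} :=
      (hD.preimage (by continuity)).measurableSet
    rw [hsetv, ← lintegral_indicator hmt]
    refine lintegral_congr fun t => ?_
    simp only [hF, hS, Set.indicator_apply, Set.mem_setOf_eq]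
  rw [step1]
  have step2 : (∫⁻ v, ∫⁻ t, F (t, v)) = ∫⁻ t, ∫⁻ v, F (t, v) := by
    have : AEMeasurable (Function.uncurry fun v t => F (t, v)) (volume.prod volume) := by
      have : (Function.uncurry fun v t => F (t, v)) = F ∘ Prod.swap := rfl
      rw [this]
      exact (hFm.comp measurable_swap).aemeasurable
    exact lintegral_lintegral_swap this
  rw [step2]
  have step3 : (∫⁻ t, ∫⁻ v, F (t, v)) = ∫⁻ t in {t : ℝ | t ≠ 0}, ∫⁻ v, F (t, v) := by
    rw [← setLIntegral_univ]
    refine setLIntegral_congr ?_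
    refine Filter.EventuallyEq.symm (ae_eq_univ.2 ?_)
    have : {t : ℝ | t ≠ 0}ᶜ = {0} := by ext t; simp
    rw [this]
    exact Real.volume_singleton
  rw [step3]
  have hne : MeasurableSet {t : ℝ | t ≠ 0} := (measurableSet_singleton (0:ℝ)).compl
  refine setLIntegral_congr_fun hne (fun t ht => ?_)
  have hft : Measurable fun v => F (t, v) :=
    hFm.comp (measurable_const.prodMk measurable_id)
  have key := lintegral_smul_sub x ht (fun v => F (t, v)) hft
  have hpt : ∀ y, F (t, t⁻¹ • (y - x))
      = D.indicator (fun y => g y * w (t, t⁻¹ • (y - x))) y := by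
    intro y
    have hxy : x + t • (t⁻¹ • (y - x)) = y := by
      rw [smul_smul, mul_inv_cancel₀ ht, one_smul, add_sub_cancel]
    simp only [hF, hS, Set.indicator_apply, Set.mem_setOf_eq, hxy]
  have hrw : ∫⁻ y, F (t, t⁻¹ • (y - x)) = ∫⁻ y in D, g y * w (t, t⁻¹ • (y - x)) := by
    simp_rw [hpt]
    exact lintegral_indicator hDm _
  have h0 : ENNReal.ofReal (|t| ^ N) ≠ 0 := by
    rw [Ne, ENNReal.ofReal_eq_zero, not_le]
    exact pow_pos (abs_pos.2 ht) N
  rw [← hrw, key, ← mul_assoc, ENNReal.inv_mul_cancel h0 ENNReal.ofReal_ne_top, one_mul]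
end

section
/- Let D ⊂ ℝ^N be a bounded open set, let σ > 0, α > −σ, n ∈ ℕ, let 0 < a ≤ b, let h : ℝ^N → ℂ be a continuous function whose support is contained in the annulus {v ∈ ℝ^N : a ≤ |v| ≤ b}, and set R = sup{|x| : x ∈ D} < ∞. For x ∈ D with x ≠ 0, z ∈ ℝ^N with x + z ∈ D, and β ∈ ℝ, define N_{α+iβ}(x,z) = ∫_{ℝ∖{0}} h(−x/t)·exp(−(α+σ+iβ)·(t + 2n·(|t|/|x|)·τ(x+z, −x/|x|)))·|t|^{−N} dt. Then: (i) for all such x, z, β one has |N_{α+iβ}(x,z)| ≤ ∫_{ℝ∖{0}} |h(−x/t)|·e^{−(α+σ)t}·|t|^{−N} dt, and the integrand on the right vanishes unless |t| ≤ |x|/a ≤ R/a; (ii) ∫_D ( ∫_{ℝ∖{0}} |h(−x/t)|·e^{−(α+σ)t}·|t|^{−N} dt ) dx ≤ ( ∫_{−R/a}^{R/a} e^{−(α+σ)t} dt )·( ∫_{ℝ^N} |h(v)| dv ) < ∞. -/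
open MeasureTheory Set
open scoped ENNReal

lemma aux_lintegral_comp_smul {N : ℕ} (f : EuclideanSpace ℝ (Fin N) → ℝ≥0∞) {c : ℝ} (hc : c ≠ 0) :
    ∫⁻ x, f (c • x) = ENNReal.ofReal |(c ^ N)⁻¹| * ∫⁻ x, f x := by
  have hmap := MeasureTheory.Measure.map_addHaar_smul
    (volume : Measure (EuclideanSpace ℝ (Fin N))) hc
  have he : ⇑(Homeomorph.smul (isUnit_iff_ne_zero.2 hc).unit
      (α := EuclideanSpace ℝ (Fin N))).toMeasurableEquiv = (fun x => c • x) := rfl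
  have h1 := MeasureTheory.lintegral_map_equiv (μ := (volume : Measure (EuclideanSpace ℝ (Fin N)))) f
      (Homeomorph.smul (isUnit_iff_ne_zero.2 hc).unit).toMeasurableEquiv
  rw [he] at h1
  rw [← h1, hmap, lintegral_smul_measure, finrank_euclideanSpace_fin, smul_eq_mul]

/-- The kernel `N_{α+iβ}(x,z) = ∫_{ℝ∖{0}} h(-x/t)·
e^{-(α+σ+iβ)(t + 2n(|t|/|x|)τ(x+z, -x/|x|))}·|t|^{-N} dt`. -/
noncomputable def Nker {N : ℕ} (D : Set (EuclideanSpace ℝ (Fin N)))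
    (σ α : ℝ) (n : ℕ) (h : EuclideanSpace ℝ (Fin N) → ℂ)
    (β : ℝ) (x z : EuclideanSpace ℝ (Fin N)) : ℂ :=
  ∫ t in {t : ℝ | t ≠ 0},
    h (-(t⁻¹ • x)) *
      Complex.exp (-(((α + σ : ℝ) : ℂ) + (β : ℂ) * Complex.I) *
        ((t + (2*(n:ℝ)) * (|t| / ‖x‖) *
          (sojourn D (x + z) (-(‖x‖⁻¹ • x))).toReal : ℝ) : ℂ)) *
      (((|t| ^ N : ℝ)⁻¹ : ℝ) : ℂ)

/-- With `R` the supremum of `‖x‖` over `D`: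
(i) `|N_{α+iβ}(x,z)| ≤ ∫_{ℝ∖{0}} |h(-x/t)|·e^{-(α+σ)t}·|t|^{-N} dt`, the integrand
vanishing unless `|t| ≤ |x|/a ≤ R/a`;
(ii) `∫_D (∫_{ℝ∖{0}} |h(-x/t)| e^{-(α+σ)t} |t|^{-N} dt) dx
  ≤ (∫_{-R/a}^{R/a} e^{-(α+σ)t} dt)·(∫_{ℝ^N} |h(v)| dv) < ∞`. -/
theorem stmt16 {N : ℕ} (D : Set (EuclideanSpace ℝ (Fin N))) (hD : IsOpen D)
    (hDb : Bornology.IsBounded D)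
    (σ α : ℝ) (hσ : 0 < σ) (hα : -σ < α) (n : ℕ)
    (a b : ℝ) (ha : 0 < a) (hab : a ≤ b)
    (h : EuclideanSpace ℝ (Fin N) → ℂ) (hc : Continuous h)
    (hsupp : ∀ v, h v ≠ 0 → a ≤ ‖v‖ ∧ ‖v‖ ≤ b)
    (R : ℝ) (hR : IsLUB ((fun x : EuclideanSpace ℝ (Fin N) => ‖x‖) '' D) R) :
    (∀ x ∈ D, x ≠ 0 → ∀ z : EuclideanSpace ℝ (Fin N), x + z ∈ D → ∀ β : ℝ,
      (ENNReal.ofReal (‖Nker D σ α n h β x z‖) ≤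
        ∫⁻ t in {t : ℝ | t ≠ 0},
          ENNReal.ofReal (‖h (-(t⁻¹ • x))‖ *
            Real.exp (-(α + σ) * t) * (|t| ^ N)⁻¹)) ∧
      (∀ t : ℝ, t ≠ 0 → h (-(t⁻¹ • x)) ≠ 0 → |t| ≤ ‖x‖ / a ∧ ‖x‖ / a ≤ R / a)) ∧
    ((∫⁻ x in D, ∫⁻ t in {t : ℝ | t ≠ 0},
        ENNReal.ofReal (‖h (-(t⁻¹ • x))‖ *
          Real.exp (-(α + σ) * t) * (|t| ^ N)⁻¹))
      ≤ ENNReal.ofReal (∫ t in (-(R/a))..(R/a), Real.exp (-(α + σ) * t)) *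
          ∫⁻ v, ENNReal.ofReal (‖h v‖) ∧
     ENNReal.ofReal (∫ t in (-(R/a))..(R/a), Real.exp (-(α + σ) * t)) *
          (∫⁻ v, ENNReal.ofReal (‖h v‖)) < ∞) := by
  
  have hK : (0:ℝ) < α + σ := by linarith
  have hh0 : h 0 = 0 := by
    by_contra h0
    have := (hsupp 0 h0).1
    simp at this; linarith
  -- key norm bound for support
  have hsize : ∀ (x : EuclideanSpace ℝ (Fin N)) (t : ℝ), t ≠ 0 → h (-(t⁻¹ • x)) ≠ 0 →
      |t| ≤ ‖x‖ / a := by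
    intro x t ht hne
    have h1 := (hsupp _ hne).1
    rw [norm_neg, norm_smul, norm_inv, Real.norm_eq_abs] at h1
    have habs : 0 < |t| := abs_pos.2 ht
    rw [le_div_iff₀ ha]
    calc |t| * a ≤ |t| * (|t|⁻¹ * ‖x‖) := by
          exact mul_le_mul_of_nonneg_left h1 habs.le
      _ = ‖x‖ := by field_simp
  -- h is zero when |t| > R/a, for ‖x‖ ≤ R
  have hvanish : ∀ (x : EuclideanSpace ℝ (Fin N)), ‖x‖ ≤ R → ∀ t : ℝ,
      ¬ |t| ≤ R / a → h (-(t⁻¹ • x)) = 0 := by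
    intro x hx t hgt
    by_cases ht : t = 0
    · subst ht; simp [hh0]
    by_contra hne
    exact hgt ((hsize x t ht hne).trans (by gcongr))
  constructor
  · intro x hx hx0 z hz β
    refine ⟨?_, fun t ht hne => ⟨hsize x t ht hne, by gcongr; exact hR.1 ⟨x, hx, rfl⟩⟩⟩
    have hb : ENNReal.ofReal (‖Nker D σ α n h β x z‖)
        = (‖Nker D σ α n h β x z‖₊ : ℝ≥0∞) := by
      exact ofReal_norm _
    rw [hb, Nker]
    refine le_trans (enorm_integral_le_lintegral_enorm _) (lintegral_mono fun t => ?_)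
    rw [← ofReal_norm]
    apply ENNReal.ofReal_le_ofReal
    set s := (2*(n:ℝ)) * (|t| / ‖x‖) * (sojourn D (x + z) (-(‖x‖⁻¹ • x))).toReal with hs
    have hs0 : 0 ≤ s := by positivity
    have hre : ((-((((α + σ : ℝ)) : ℂ) + (β : ℂ) * Complex.I)) * (((t + s : ℝ)) : ℂ)).re
        = -(α+σ)*(t+s) := by
      simp [Complex.mul_re]
    rw [norm_mul, norm_mul,
      Complex.norm_exp, hre, Complex.norm_real, Real.norm_eq_abs, abs_of_nonneg (by positivity : (0:ℝ) ≤ (|t|^N)⁻¹)]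
    have hE : Real.exp (-(α+σ)*(t+s)) ≤ Real.exp (-(α+σ)*t) :=
      Real.exp_le_exp.2 (by nlinarith)
    exact mul_le_mul_of_nonneg_right
      (mul_le_mul_of_nonneg_left hE (norm_nonneg _)) (by positivity)
  · -- part (ii)
    set F : EuclideanSpace ℝ (Fin N) → ℝ → ℝ≥0∞ := fun x t =>
      ENNReal.ofReal (‖h (-(t⁻¹ • x))‖ * Real.exp (-(α + σ) * t) * (|t| ^ N)⁻¹)
      with hF
    have hHc : HasCompactSupport h := by
      apply HasCompactSupport.intro (isCompact_closedBall (0 : EuclideanSpace ℝ (Fin N)) b)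
      intro v hv
      by_contra hne
      exact hv (Metric.mem_closedBall.2 (by simpa [dist_eq_norm] using (hsupp v hne).2))
    have hint : Integrable h := hc.integrable_of_hasCompactSupport hHc
    have hHeq : (fun v => ENNReal.ofReal (‖h v‖)) = fun v => (‖h v‖₊ : ℝ≥0∞) := by
      funext v; exact ofReal_norm _
    have hHfin : (∫⁻ v, ENNReal.ofReal (‖h v‖)) < ∞ := by
      rw [hHeq]; exact hint.2
    refine ⟨?_, ENNReal.mul_lt_top ENNReal.ofReal_lt_top hHfin⟩
    rcases D.eq_empty_or_nonempty with rfl | ⟨x₀, hx₀⟩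
    · simp
    have hR0 : 0 ≤ R := le_trans (norm_nonneg x₀) (hR.1 ⟨x₀, hx₀, rfl⟩)
    have hle : -(R/a) ≤ R/a := by
      have : 0 ≤ R/a := div_nonneg hR0 ha.le
      linarith
    set S : Set ℝ := Icc (-(R/a)) (R/a) with hS
    have hSm : MeasurableSet S := hS ▸ measurableSet_Icc
    -- Step A : restrict t to S
    have stepA : ∀ x ∈ D, (∫⁻ t in {t : ℝ | t ≠ 0}, F x t) ≤ ∫⁻ t in S, F x t := by
      intro x hx
      have hxR : ‖x‖ ≤ R := hR.1 ⟨x, hx, rfl⟩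
      have hcongr : ∀ t ∈ {t : ℝ | t ≠ 0}, F x t = S.indicator (F x) t := by
        intro t ht
        by_cases htS : t ∈ S
        · rw [indicator_of_mem htS]
        · rw [indicator_of_notMem htS, hF]
          have h0 : h (-(t⁻¹ • x)) = 0 := by
            apply hvanish x hxR
            intro habs
            exact htS (abs_le.1 habs)
          simp [h0]
      calc (∫⁻ t in {t : ℝ | t ≠ 0}, F x t)
          = ∫⁻ t in {t : ℝ | t ≠ 0}, S.indicator (F x) t :=
            setLIntegral_congr_fun (measurableSet_singleton (0:ℝ)).compl
              hcongr
        _ = ∫⁻ t in S ∩ {t : ℝ | t ≠ 0}, F x t := by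
            rw [lintegral_indicator hSm, Measure.restrict_restrict hSm]
        _ ≤ ∫⁻ t in S, F x t :=
            lintegral_mono' (Measure.restrict_mono inter_subset_left le_rfl) le_rfl
    -- measurability of F uncurried
    have hFm : Measurable (Function.uncurry F) := by
      apply Measurable.ennreal_ofReal
      refine Measurable.mul (Measurable.mul ?_ ?_) ?_
      · exact (continuous_norm.comp hc).measurable.comp
          ((measurable_snd.inv.smul measurable_fst).neg)
      · exact (Real.continuous_exp.comp
          (continuous_const.mul continuous_id)).measurable.comp measurable_snd
      · exact (measurable_snd.abs.pow_const N).inv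
    -- Step D : pointwise in t
    have stepD : ∀ t : ℝ, (∫⁻ x, F x t) ≤
        ENNReal.ofReal (Real.exp (-(α+σ)*t)) * ∫⁻ v, ENNReal.ofReal (‖h v‖) := by
      intro t
      by_cases ht : t = 0
      · subst ht
        simp [hF, hh0]
      · refine le_of_eq ?_
        have hc' : |((-t⁻¹:ℝ)^N)⁻¹| = |t|^N := by
          rw [abs_inv, abs_pow, abs_neg, abs_inv, inv_pow, inv_inv]
        have hcne : (-t⁻¹ : ℝ) ≠ 0 := by simpa using inv_ne_zero ht
        have e1 : ∀ x : EuclideanSpace ℝ (Fin N), F x t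
            = (fun v => ENNReal.ofReal (‖h v‖)) ((-t⁻¹) • x)
              * ENNReal.ofReal (Real.exp (-(α+σ)*t) * (|t|^N)⁻¹) := by
          intro x
          rw [hF]
          simp only [← neg_smul]
          rw [mul_assoc, ENNReal.ofReal_mul (norm_nonneg _)]
        have hone : ENNReal.ofReal (|t|^N) * ENNReal.ofReal ((|t|^N)⁻¹) = 1 := by
          rw [← ENNReal.ofReal_mul (by positivity),
            mul_inv_cancel₀ (by positivity), ENNReal.ofReal_one]
        calc (∫⁻ x, F x t)
            = ∫⁻ x, (fun v => ENNReal.ofReal (‖h v‖)) ((-t⁻¹) • x)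
                * ENNReal.ofReal (Real.exp (-(α+σ)*t) * (|t|^N)⁻¹) := by
              simp only [e1]
          _ = (ENNReal.ofReal |((-t⁻¹:ℝ)^N)⁻¹| * ∫⁻ v, ENNReal.ofReal (‖h v‖))
                * ENNReal.ofReal (Real.exp (-(α+σ)*t) * (|t|^N)⁻¹) := by
              rw [lintegral_mul_const' _ _ ENNReal.ofReal_ne_top,
                aux_lintegral_comp_smul (fun v => ENNReal.ofReal (‖h v‖)) hcne]
          _ = ENNReal.ofReal (Real.exp (-(α+σ)*t)) * ∫⁻ v, ENNReal.ofReal (‖h v‖) := by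
              rw [hc', ENNReal.ofReal_mul (Real.exp_nonneg _)]
              calc ENNReal.ofReal (|t|^N) * (∫⁻ v, ENNReal.ofReal (‖h v‖))
                    * (ENNReal.ofReal (Real.exp (-(α+σ)*t)) * ENNReal.ofReal ((|t|^N)⁻¹))
                  = (ENNReal.ofReal (|t|^N) * ENNReal.ofReal ((|t|^N)⁻¹))
                    * (ENNReal.ofReal (Real.exp (-(α+σ)*t))
                      * ∫⁻ v, ENNReal.ofReal (‖h v‖)) := by ring
                _ = ENNReal.ofReal (Real.exp (-(α+σ)*t))
                      * ∫⁻ v, ENNReal.ofReal (‖h v‖) := by rw [hone, one_mul]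
    -- the interval integral identity
    have hIoc : (∫⁻ t in S, ENNReal.ofReal (Real.exp (-(α+σ)*t)))
        = ENNReal.ofReal (∫ t in (-(R/a))..(R/a), Real.exp (-(α + σ) * t)) := by
      have hcont : Continuous (fun t : ℝ => Real.exp (-(α+σ)*t)) := by fun_prop
      rw [intervalIntegral.integral_of_le hle, ← integral_Icc_eq_integral_Ioc,
        MeasureTheory.ofReal_integral_eq_lintegral_ofReal hcont.integrableOn_Icc
          (Filter.Eventually.of_forall fun t => Real.exp_nonneg _), hS]
    calc (∫⁻ x in D, ∫⁻ t in {t : ℝ | t ≠ 0}, F x t)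
        ≤ ∫⁻ x in D, ∫⁻ t in S, F x t :=
          lintegral_mono_ae ((ae_restrict_iff' hD.measurableSet).2
            (Filter.Eventually.of_forall stepA))
      _ ≤ ∫⁻ x, ∫⁻ t in S, F x t := lintegral_mono' Measure.restrict_le_self le_rfl
      _ = ∫⁻ t in S, ∫⁻ x, F x t := lintegral_lintegral_swap hFm.aemeasurable
      _ ≤ ∫⁻ t in S, ENNReal.ofReal (Real.exp (-(α+σ)*t))
            * ∫⁻ v, ENNReal.ofReal (‖h v‖) :=
          lintegral_mono fun t => stepD t
      _ = (∫⁻ t in S, ENNReal.ofReal (Real.exp (-(α+σ)*t)))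
            * ∫⁻ v, ENNReal.ofReal (‖h v‖) :=
          lintegral_mul_const' _ _ hHfin.ne
      _ = ENNReal.ofReal (∫ t in (-(R/a))..(R/a), Real.exp (-(α + σ) * t))
            * ∫⁻ v, ENNReal.ofReal (‖h v‖) := by rw [hIoc]
end
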